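/- The integral equation v(ξ,η) = −(1/2)∫_{ξ/2}^{η/2} q(s) ds − (1/4)∫₀^ξ∫_ξ^η q((η₁−ξ₁)/2) v(ξ₁,η₁) dη₁ dξ₁ has a unique continuous solution v on the triangle {(ξ,η) : 0 ≤ ξ ≤ η ≤ T} for every T > 0. -/

import Mathlib

open MeasureTheory Set

abbrev MatC (n : ℕ) := EuclideanSpace ℂ (Fin n) →L[ℂ] EuclideanSpace ℂ (Fin n)

noncomputable def v0fun (n : ℕ) (q : ℝ → MatC n) (ξ η : ℝ) : MatC n :=
  -((1 / 2 : ℂ) • ∫ s in (ξ / 2)..(η / 2), q s)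

noncomputable def Vop (n : ℕ) (q : ℝ → MatC n) (v : ℝ → ℝ → MatC n) :
    ℝ → ℝ → MatC n :=
  fun ξ η => -((1 / 4 : ℂ) • ∫ ξ₁ in (0:ℝ)..ξ, ∫ η₁ in ξ..η, q ((η₁ - ξ₁) / 2) * v ξ₁ η₁)

open intervalIntegral Function
open scoped NNReal
open scoped Interval

set_option synthInstance.maxHeartbeats 1000000
set_option maxHeartbeats 1000000

namespace Stmt6Aux

variable {n : ℕ}

def tri (T : ℝ) : Set (ℝ × ℝ) := {p : ℝ × ℝ | 0 ≤ p.1 ∧ p.1 ≤ p.2 ∧ p.2 ≤ T}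

lemma isCompact_tri (T : ℝ) : IsCompact (tri T) := by
  refine IsCompact.of_isClosed_subset (isCompact_Icc (a := ((0:ℝ),(0:ℝ))) (b := (T,T))) ?_ ?_
  · exact (isClosed_le continuous_const continuous_fst).inter
      ((isClosed_le continuous_fst continuous_snd).inter
        (isClosed_le continuous_snd continuous_const))
  · rintro ⟨x,y⟩ ⟨h1,h2,h3⟩
    exact ⟨⟨h1, h1.trans h2⟩, ⟨h2.trans h3, h3⟩⟩

noncomputable def proj (T : ℝ) (p : ℝ × ℝ) : ℝ × ℝ :=
  (min (max p.1 0) T, min (max p.2 (min (max p.1 0) T)) T)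

lemma proj_mem {T : ℝ} (hT : 0 ≤ T) (p : ℝ × ℝ) : proj T p ∈ tri T :=
  ⟨le_min (le_max_right _ _) hT,
   le_min (le_max_right _ _) (min_le_right _ _), min_le_right _ _⟩

lemma proj_continuous (T : ℝ) : Continuous (proj T) := by
  unfold proj; fun_prop

lemma proj_eq {T : ℝ} {p : ℝ × ℝ} (hp : p ∈ tri T) : proj T p = p := by
  obtain ⟨h1, h2, h3⟩ := hp
  have e1 : min (max p.1 0) T = p.1 := by
    rw [max_eq_left h1, min_eq_left (h2.trans h3)]
  unfold proj
  rw [e1, max_eq_left h2, min_eq_left h3]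


section QSec

variable {n : ℕ} (Q : ℝ → MatC n)

/-- total mass of `t ↦ ‖Q (t/2)‖`. -/
noncomputable def IQ : ℝ := ∫ t : ℝ, ‖Q (t/2)‖

lemma IQ_nonneg : 0 ≤ IQ Q := integral_nonneg fun _ => norm_nonneg _

variable {Q} {w : ℝ → ℝ → MatC n} {M : ℝ}

instance : SecondCountableTopologyEither ℝ (MatC n) := ⟨Or.inl inferInstance⟩
instance : SecondCountableTopologyEither (ℝ × ℝ) (MatC n) := ⟨Or.inl inferInstance⟩

lemma g_int (hQi : Integrable Q (volume : Measure ℝ)) :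
    Integrable (fun t => ‖Q (t/2)‖) (volume : Measure ℝ) :=
  (hQi.comp_div two_ne_zero).norm

lemma g_int_shift (hQi : Integrable Q (volume : Measure ℝ)) (c : ℝ) :
    Integrable (fun s => ‖Q ((s - c)/2)‖) (volume : Measure ℝ) :=
  (g_int hQi).comp_sub_right c

lemma g_integral_shift (c : ℝ) : (∫ s : ℝ, ‖Q ((s - c)/2)‖) = IQ Q :=
  integral_sub_right_eq_self (fun t => ‖Q (t/2)‖) c

lemma inner_integrable (hQm : StronglyMeasurable Q)
    (hQi : Integrable Q (volume : Measure ℝ)) (hw : Continuous (uncurry w))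
    (hwb : ∀ a b : ℝ, ‖w a b‖ ≤ M) (c : ℝ) :
    Integrable (fun s => Q ((s - c)/2) * w c s) (volume : Measure ℝ) := by
  refine Integrable.mono' ((g_int_shift hQi c).mul_const M) ?_ ?_
  · exact ((hQm.comp_measurable ((measurable_id.sub_const c).div_const 2)).mul
      ((hw.comp (Continuous.prodMk_right c)).stronglyMeasurable)).aestronglyMeasurable
  · refine Filter.Eventually.of_forall fun s => ?_
    exact (norm_mul_le _ _).trans (mul_le_mul_of_nonneg_left (hwb c s) (norm_nonneg _))

lemma joint_sm (hQm : StronglyMeasurable Q) (hw : Continuous (uncurry w)) :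
    StronglyMeasurable (fun z : ℝ × ℝ => Q ((z.2 - z.1)/2) * w z.1 z.2) :=
  (hQm.comp_measurable ((measurable_snd.sub measurable_fst).div_const 2)).mul
    hw.stronglyMeasurable

lemma psi_sm (hQm : StronglyMeasurable Q) (hw : Continuous (uncurry w)) (y₀ y : ℝ) :
    StronglyMeasurable (fun c => ∫ s in y₀..y, Q ((s - c)/2) * w c s) := by
  by_cases hy : y₀ ≤ y
  · have h : (fun c => ∫ s in y₀..y, Q ((s - c)/2) * w c s)
        = fun c => ∫ s in Ι y₀ y, Q ((s - c)/2) * w c s := by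
      funext c; rw [intervalIntegral_eq_integral_uIoc, if_pos hy, one_smul]
    rw [h]; exact (joint_sm hQm hw).integral_prod_right'
  · have h : (fun c => ∫ s in y₀..y, Q ((s - c)/2) * w c s)
        = fun c => -(∫ s in Ι y₀ y, Q ((s - c)/2) * w c s) := by
      funext c; rw [intervalIntegral_eq_integral_uIoc, if_neg hy, neg_one_smul]
    rw [h]; exact ((joint_sm hQm hw).integral_prod_right').neg

lemma psi_bound (hQm : StronglyMeasurable Q) (hQi : Integrable Q (volume : Measure ℝ))
    (hw : Continuous (uncurry w)) (hwb : ∀ a b : ℝ, ‖w a b‖ ≤ M)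
    (hM : 0 ≤ M) (c y₁ y₂ : ℝ) :
    ‖∫ s in y₁..y₂, Q ((s - c)/2) * w c s‖ ≤ M * IQ Q := by
  refine (norm_integral_le_integral_norm_uIoc).trans ?_
  have h1 : (∫ s in Ι y₁ y₂, ‖Q ((s - c)/2) * w c s‖)
      ≤ ∫ s in Ι y₁ y₂, ‖Q ((s - c)/2)‖ * M := by
    refine integral_mono_ae ((inner_integrable hQm hQi hw hwb c).norm.restrict)
      (((g_int_shift hQi c).mul_const M).restrict) ?_
    exact Filter.Eventually.of_forall fun s =>
      (norm_mul_le _ _).trans (mul_le_mul_of_nonneg_left (hwb c s) (norm_nonneg _))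
  refine h1.trans ?_
  have h2 : (∫ s in Ι y₁ y₂, ‖Q ((s - c)/2)‖ * M)
      ≤ ∫ s : ℝ, ‖Q ((s - c)/2)‖ * M := by
    refine setIntegral_le_integral ((g_int_shift hQi c).mul_const M) ?_
    exact Filter.Eventually.of_forall fun s => mul_nonneg (norm_nonneg _) hM
  refine h2.trans ?_
  rw [MeasureTheory.integral_mul_const, g_integral_shift (Q := Q) c, mul_comm]

lemma psi_ii (hQm : StronglyMeasurable Q) (hQi : Integrable Q (volume : Measure ℝ))
    (hw : Continuous (uncurry w)) (hwb : ∀ a b : ℝ, ‖w a b‖ ≤ M)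
    (hM : 0 ≤ M) (y₁ y₂ a b : ℝ) :
    IntervalIntegrable (fun c => ∫ s in y₁..y₂, Q ((s - c)/2) * w c s) volume a b := by
  haveI : IsFiniteMeasure ((volume : Measure ℝ).restrict (Ι a b)) := by
    rw [uIoc]; infer_instance
  rw [intervalIntegrable_iff]
  have h1 : Integrable (fun _ : ℝ => M * IQ Q) ((volume : Measure ℝ).restrict (Ι a b)) :=
    integrable_const _
  exact Integrable.mono' h1 (psi_sm hQm hw y₁ y₂).aestronglyMeasurable
    (Filter.Eventually.of_forall fun c => psi_bound hQm hQi hw hwb hM c y₁ y₂)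

noncomputable def VQ (Q : ℝ → MatC n) (w : ℝ → ℝ → MatC n) (ξ η : ℝ) : MatC n :=
  -((1/4 : ℂ) • ∫ c in (0:ℝ)..ξ, ∫ s in ξ..η, Q ((s - c)/2) * w c s)

noncomputable def v0Q (Q : ℝ → MatC n) (ξ η : ℝ) : MatC n :=
  -((1/2 : ℂ) • ∫ s in (ξ/2)..(η/2), Q s)

lemma G_cont (hQm : StronglyMeasurable Q) (hQi : Integrable Q (volume : Measure ℝ))
    (hw : Continuous (uncurry w)) (hwb : ∀ a b : ℝ, ‖w a b‖ ≤ M) (hM : 0 ≤ M) :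
    Continuous (fun p : ℝ × ℝ =>
      ∫ c in (0:ℝ)..p.2, ∫ s in (0:ℝ)..p.1, Q ((s - c)/2) * w c s) := by
  rw [continuous_iff_continuousAt]
  rintro ⟨y₀, ξ₀⟩
  have h0 : (0:ℝ) < |ξ₀| + 1 := by positivity
  have hab1 : (0:ℝ) ∈ Ioo (-(|ξ₀|+1)) (|ξ₀|+1) := ⟨by linarith, h0⟩
  have hab2 : ξ₀ ∈ Ioo (-(|ξ₀|+1)) (|ξ₀|+1) :=
    ⟨by nlinarith [neg_abs_le ξ₀], by nlinarith [le_abs_self ξ₀]⟩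
  exact intervalIntegral.continuousAt_parametric_primitive_of_dominated
    (μ := volume) (F := fun y c => ∫ s in (0:ℝ)..y, Q ((s - c)/2) * w c s)
    (fun _ => M * IQ Q) (-(|ξ₀|+1)) (|ξ₀|+1)
    (fun y => (psi_sm hQm hw 0 y).aestronglyMeasurable)
    (Filter.Eventually.of_forall fun y => Filter.Eventually.of_forall fun c =>
      psi_bound hQm hQi hw hwb hM c 0 y)
    (_root_.intervalIntegrable_const)
    (Filter.Eventually.of_forall fun c =>
      ((inner_integrable hQm hQi hw hwb c).continuous_primitive 0).continuousAt)
    hab1 hab2 (measure_singleton _)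

lemma VQ_eq (hQm : StronglyMeasurable Q) (hQi : Integrable Q (volume : Measure ℝ))
    (hw : Continuous (uncurry w)) (hwb : ∀ a b : ℝ, ‖w a b‖ ≤ M) (hM : 0 ≤ M) (ξ η : ℝ) :
    (∫ c in (0:ℝ)..ξ, ∫ s in ξ..η, Q ((s - c)/2) * w c s)
      = (∫ c in (0:ℝ)..ξ, ∫ s in (0:ℝ)..η, Q ((s - c)/2) * w c s)
        - ∫ c in (0:ℝ)..ξ, ∫ s in (0:ℝ)..ξ, Q ((s - c)/2) * w c s := by
  rw [← intervalIntegral.integral_sub (psi_ii hQm hQi hw hwb hM 0 η 0 ξ)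
    (psi_ii hQm hQi hw hwb hM 0 ξ 0 ξ)]
  refine intervalIntegral.integral_congr fun c _ => ?_
  exact (integral_interval_sub_left
    ((inner_integrable hQm hQi hw hwb c).intervalIntegrable)
    ((inner_integrable hQm hQi hw hwb c).intervalIntegrable)).symm

lemma VQ_cont (hQm : StronglyMeasurable Q) (hQi : Integrable Q (volume : Measure ℝ))
    (hw : Continuous (uncurry w)) (hwb : ∀ a b : ℝ, ‖w a b‖ ≤ M) (hM : 0 ≤ M) :
    Continuous (fun p : ℝ × ℝ => VQ Q w p.1 p.2) := by
  have h : (fun p : ℝ × ℝ => VQ Q w p.1 p.2)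
      = fun p : ℝ × ℝ => -((1/4 : ℂ) •
        ((fun r : ℝ × ℝ => ∫ c in (0:ℝ)..r.2, ∫ s in (0:ℝ)..r.1, Q ((s - c)/2) * w c s)
            (p.2, p.1)
          - (fun r : ℝ × ℝ => ∫ c in (0:ℝ)..r.2, ∫ s in (0:ℝ)..r.1, Q ((s - c)/2) * w c s)
            (p.1, p.1))) := by
    funext p
    rw [VQ, VQ_eq hQm hQi hw hwb hM]
  rw [h]
  have hG := G_cont hQm hQi hw hwb hM
  exact ((((hG.comp (continuous_snd.prodMk continuous_fst)).sub
    (hG.comp (continuous_fst.prodMk continuous_fst))).const_smul (1/4 : ℂ)).neg)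

lemma v0Q_cont (hQi : Integrable Q (volume : Measure ℝ)) :
    Continuous (fun p : ℝ × ℝ => v0Q Q p.1 p.2) := by
  have hF : Continuous fun x : ℝ => ∫ s in (0:ℝ)..x, Q s := hQi.continuous_primitive 0
  have h : (fun p : ℝ × ℝ => v0Q Q p.1 p.2)
      = fun p : ℝ × ℝ => -((1/2 : ℂ) •
          ((fun x : ℝ => ∫ s in (0:ℝ)..x, Q s) (p.2/2)
            - (fun x : ℝ => ∫ s in (0:ℝ)..x, Q s) (p.1/2))) := by
    funext p
    rw [v0Q, integral_interval_sub_left (hQi.intervalIntegrable)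
      (hQi.intervalIntegrable)]
  rw [h]
  exact (((hF.comp (continuous_snd.div_const 2)).sub
    (hF.comp (continuous_fst.div_const 2))).const_smul (1/2 : ℂ)).neg

lemma VQ_norm_bound (hQm : StronglyMeasurable Q) (hQi : Integrable Q (volume : Measure ℝ))
    (hw : Continuous (uncurry w)) (hwb : ∀ a b : ℝ, ‖w a b‖ ≤ M)
    {T lam c : ℝ} (hlam : IQ Q < lam) (hc : 0 ≤ c)
    (hreg : ∀ a b : ℝ, 0 ≤ a → a ≤ b → b ≤ T → ‖w a b‖ ≤ c * Real.exp (lam * a))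
    {ξ η : ℝ} (hξ : 0 ≤ ξ) (hξη : ξ ≤ η) (hη : η ≤ T) :
    ‖VQ Q w ξ η‖ ≤ c / 2 * Real.exp (lam * ξ) := by
  have hlam0 : 0 < lam := (IQ_nonneg Q).trans_lt hlam
  have hnorm14 : ‖(1/4 : ℂ)‖ = 1/4 := by
    rw [show (1/4 : ℂ) = ((1/4 : ℝ) : ℂ) by norm_num, Complex.norm_real]
    norm_num
  have houter : ‖∫ c₁ in (0:ℝ)..ξ, ∫ s in ξ..η, Q ((s - c₁)/2) * w c₁ s‖
      ≤ |∫ c₁ in (0:ℝ)..ξ, IQ Q * (c * Real.exp (lam * c₁))| := by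
    refine intervalIntegral.norm_integral_le_abs_of_norm_le ?_ ?_
    · rw [uIoc_of_le hξ]
      filter_upwards [ae_restrict_mem measurableSet_Ioc] with c₁ hc₁
      -- inner bound
      have hinner : ‖∫ s in ξ..η, Q ((s - c₁)/2) * w c₁ s‖
          ≤ |∫ s in ξ..η, ‖Q ((s - c₁)/2)‖ * (c * Real.exp (lam * c₁))| := by
        refine intervalIntegral.norm_integral_le_abs_of_norm_le ?_
          (((g_int_shift hQi c₁).mul_const _).intervalIntegrable)
        rw [uIoc_of_le hξη]
        filter_upwards [ae_restrict_mem measurableSet_Ioc] with s hs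
        refine (norm_mul_le _ _).trans (mul_le_mul_of_nonneg_left ?_ (norm_nonneg _))
        exact hreg c₁ s hc₁.1.le (hc₁.2.trans hs.1.le) (hs.2.trans hη)
      refine hinner.trans ?_
      have hnn : 0 ≤ ∫ s in ξ..η, ‖Q ((s - c₁)/2)‖ * (c * Real.exp (lam * c₁)) := by
        refine intervalIntegral.integral_nonneg hξη fun s _ => ?_
        positivity
      rw [abs_of_nonneg hnn, intervalIntegral.integral_of_le hξη]
      have hle : (∫ s in Ioc ξ η, ‖Q ((s - c₁)/2)‖ * (c * Real.exp (lam * c₁)))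
          ≤ ∫ s : ℝ, ‖Q ((s - c₁)/2)‖ * (c * Real.exp (lam * c₁)) := by
        refine setIntegral_le_integral ((g_int_shift hQi c₁).mul_const _) ?_
        exact Filter.Eventually.of_forall fun s => by positivity
      refine hle.trans ?_
      rw [MeasureTheory.integral_mul_const, g_integral_shift (Q := Q) c₁, mul_comm]
    · exact Continuous.intervalIntegrable (by fun_prop) 0 ξ
  have hval : (∫ c₁ in (0:ℝ)..ξ, IQ Q * (c * Real.exp (lam * c₁)))
      = IQ Q * c * (lam⁻¹ * (Real.exp (lam * ξ) - 1)) := by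
    rw [intervalIntegral.integral_const_mul, intervalIntegral.integral_const_mul]
    rw [intervalIntegral.integral_comp_mul_left (fun x => Real.exp x) hlam0.ne']
    rw [mul_zero, integral_exp, Real.exp_zero, smul_eq_mul]
    ring
  have hE1 : (1:ℝ) ≤ Real.exp (lam * ξ) := Real.one_le_exp (by positivity)
  have hfrac : IQ Q * lam⁻¹ ≤ 1 := by
    rw [← div_eq_mul_inv, div_le_one hlam0]
    exact hlam.le
  have hinv0 : (0:ℝ) ≤ lam⁻¹ := by positivity
  calc ‖VQ Q w ξ η‖
      = 1/4 * ‖∫ c₁ in (0:ℝ)..ξ, ∫ s in ξ..η, Q ((s - c₁)/2) * w c₁ s‖ := by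
        rw [VQ, norm_neg]
        have hns := norm_smul ((1:ℂ)/4)
          (∫ c₁ in (0:ℝ)..ξ, ∫ s in ξ..η, Q ((s - c₁)/2) * w c₁ s)
        rw [hns, hnorm14]
    _ ≤ 1/4 * |∫ c₁ in (0:ℝ)..ξ, IQ Q * (c * Real.exp (lam * c₁))| := by
        nlinarith [houter]
    _ = 1/4 * (IQ Q * c * (lam⁻¹ * (Real.exp (lam * ξ) - 1))) := by
        rw [hval, abs_of_nonneg]
        exact mul_nonneg (mul_nonneg (IQ_nonneg Q) hc)
          (mul_nonneg hinv0 (sub_nonneg.mpr hE1))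
    _ ≤ c / 2 * Real.exp (lam * ξ) := by
        have hA : (IQ Q * lam⁻¹) * (c * (Real.exp (lam * ξ) - 1))
            ≤ c * (Real.exp (lam * ξ) - 1) := by
          nlinarith [mul_nonneg hc (sub_nonneg.mpr hE1), hfrac, IQ_nonneg Q, hinv0]
        nlinarith [hA, hc, hE1]

lemma VQ_sub (hQm : StronglyMeasurable Q) (hQi : Integrable Q (volume : Measure ℝ))
    {w₁ w₂ : ℝ → ℝ → MatC n} {M₁ M₂ : ℝ}
    (hw₁ : Continuous (uncurry w₁)) (hwb₁ : ∀ a b : ℝ, ‖w₁ a b‖ ≤ M₁) (hM₁ : 0 ≤ M₁)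
    (hw₂ : Continuous (uncurry w₂)) (hwb₂ : ∀ a b : ℝ, ‖w₂ a b‖ ≤ M₂) (hM₂ : 0 ≤ M₂)
    (ξ η : ℝ) :
    VQ Q w₁ ξ η - VQ Q w₂ ξ η = VQ Q (fun a b => w₁ a b - w₂ a b) ξ η := by
  have hsub : ∀ c₁ : ℝ, (∫ s in ξ..η, Q ((s - c₁)/2) * (w₁ c₁ s - w₂ c₁ s))
      = (∫ s in ξ..η, Q ((s - c₁)/2) * w₁ c₁ s)
        - ∫ s in ξ..η, Q ((s - c₁)/2) * w₂ c₁ s := by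
    intro c₁
    rw [← intervalIntegral.integral_sub
      ((inner_integrable hQm hQi hw₁ hwb₁ c₁).intervalIntegrable)
      ((inner_integrable hQm hQi hw₂ hwb₂ c₁).intervalIntegrable)]
    congr 1; funext s; rw [mul_sub]
  have houter : (∫ c₁ in (0:ℝ)..ξ, ∫ s in ξ..η, Q ((s - c₁)/2) * (w₁ c₁ s - w₂ c₁ s))
      = (∫ c₁ in (0:ℝ)..ξ, ∫ s in ξ..η, Q ((s - c₁)/2) * w₁ c₁ s)
        - ∫ c₁ in (0:ℝ)..ξ, ∫ s in ξ..η, Q ((s - c₁)/2) * w₂ c₁ s := by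
    rw [← intervalIntegral.integral_sub (psi_ii hQm hQi hw₁ hwb₁ hM₁ ξ η 0 ξ)
      (psi_ii hQm hQi hw₂ hwb₂ hM₂ ξ η 0 ξ)]
    exact intervalIntegral.integral_congr fun c₁ _ => hsub c₁
  unfold VQ
  rw [houter, smul_sub]
  abel

lemma VQ_congr_region {w w' : ℝ → ℝ → MatC n} {T ξ η : ℝ}
    (hξ : 0 ≤ ξ) (hξη : ξ ≤ η) (hη : η ≤ T)
    (h : ∀ a b : ℝ, 0 ≤ a → a ≤ b → b ≤ T → w a b = w' a b) :
    VQ Q w ξ η = VQ Q w' ξ η := by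
  unfold VQ
  congr 2
  refine intervalIntegral.integral_congr fun c₁ hc₁ => ?_
  rw [uIcc_of_le hξ] at hc₁
  refine intervalIntegral.integral_congr fun s hs => ?_
  rw [uIcc_of_le hξη] at hs
  rw [h c₁ s hc₁.1 (hc₁.2.trans hs.1) (hs.2.trans hη)]

lemma ae_affine {q : ℝ → MatC n} {T : ℝ}
    (hqQ : ∀ᵐ x : ℝ, x ∈ Icc (0:ℝ) T → q x = Q x) (c₁ : ℝ) :
    ∀ᵐ s : ℝ, ((s - c₁)/2 ∈ Icc (0:ℝ) T → q ((s - c₁)/2) = Q ((s - c₁)/2)) := by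
  have hN : (volume : Measure ℝ) {x : ℝ | ¬ (x ∈ Icc (0:ℝ) T → q x = Q x)} = 0 := by
    simpa [ae_iff] using hqQ
  rw [ae_iff]
  have hfun : (fun s : ℝ => (s - c₁)/2)
      = (fun x : ℝ => x + (-(c₁/2))) ∘ (fun s : ℝ => s * (1/2)) := by
    funext s; simp only [Function.comp_apply]; ring
  have hset : {s : ℝ | ¬ ((s - c₁)/2 ∈ Icc (0:ℝ) T → q ((s - c₁)/2) = Q ((s - c₁)/2))}
      = (fun s : ℝ => (s - c₁)/2) ⁻¹'
          {x : ℝ | ¬ (x ∈ Icc (0:ℝ) T → q x = Q x)} := rfl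
  rw [hset, hfun, preimage_comp, Real.volume_preimage_mul_right (by norm_num : (1/2:ℝ) ≠ 0)]
  rw [(measurePreserving_add_right (volume : Measure ℝ)
    (-(c₁/2))).quasiMeasurePreserving.preimage_null hN, mul_zero]

lemma v0_congr {q : ℝ → MatC n} {T : ℝ} (hT : 0 ≤ T)
    (hqQ : ∀ᵐ x : ℝ, x ∈ Icc (0:ℝ) T → q x = Q x) {ξ η : ℝ}
    (hξ : 0 ≤ ξ) (hξη : ξ ≤ η) (hη : η ≤ T) :
    v0fun n q ξ η = v0Q Q ξ η := by
  unfold v0fun v0Q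
  congr 2
  refine intervalIntegral.integral_congr_ae ?_
  filter_upwards [hqQ] with x hx hmem
  rw [uIoc_of_le (by linarith : ξ/2 ≤ η/2)] at hmem
  exact hx ⟨by linarith [hmem.1], by linarith [hmem.2]⟩

lemma vop_congr {q : ℝ → MatC n} {T : ℝ}
    (hqQ : ∀ᵐ x : ℝ, x ∈ Icc (0:ℝ) T → q x = Q x) (w : ℝ → ℝ → MatC n) {ξ η : ℝ}
    (hξ : 0 ≤ ξ) (hξη : ξ ≤ η) (hη : η ≤ T) :
    Vop n q w ξ η = VQ Q w ξ η := by
  unfold Vop VQ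
  congr 2
  refine intervalIntegral.integral_congr fun c₁ hc₁ => ?_
  rw [uIcc_of_le hξ] at hc₁
  refine intervalIntegral.integral_congr_ae ?_
  filter_upwards [ae_affine (Q := Q) hqQ c₁] with s hs hmem
  rw [uIoc_of_le hξη] at hmem
  have harg : (s - c₁)/2 ∈ Icc (0:ℝ) T := by
    constructor
    · have h1 := hc₁.2; have h2 := hmem.1; linarith
    · have h1 := hc₁.1; have h2 := hmem.2; linarith
  rw [hs harg]

end QSec






section Fixed

variable {n : ℕ} {T : ℝ} {Q : ℝ → MatC n}

instance (T : ℝ) : CompactSpace ↥(tri T) :=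
  isCompact_iff_compactSpace.mp (isCompact_tri T)

noncomputable def extend (T : ℝ) (hT0 : 0 ≤ T) (u : C(↥(tri T), MatC n)) :
    ℝ → ℝ → MatC n := fun a b => u ⟨proj T (a, b), proj_mem hT0 _⟩

lemma extend_cont (hT0 : 0 ≤ T) (u : C(↥(tri T), MatC n)) :
    Continuous (uncurry (extend T hT0 u)) := by
  have h : uncurry (extend T hT0 u)
      = fun p : ℝ × ℝ => u ⟨proj T p, proj_mem hT0 p⟩ := by
    funext p; rfl
  rw [h]
  exact u.continuous.comp ((proj_continuous T).subtype_mk _)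

lemma extend_bd (hT0 : 0 ≤ T) (u : C(↥(tri T), MatC n)) (a b : ℝ) :
    ‖extend T hT0 u a b‖ ≤ ‖u‖ :=
  u.norm_coe_le_norm _

lemma extend_eq (hT0 : 0 ≤ T) (u : C(↥(tri T), MatC n)) {a b : ℝ}
    (h : (a, b) ∈ tri T) : extend T hT0 u a b = u ⟨(a, b), h⟩ := by
  unfold extend
  congr 1
  exact Subtype.ext (proj_eq h)

noncomputable def AOp (Q : ℝ → MatC n) (hQm : StronglyMeasurable Q)
    (hQi : Integrable Q (volume : Measure ℝ)) (hT0 : 0 ≤ T) :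
    C(↥(tri T), MatC n) → C(↥(tri T), MatC n) := fun u =>
  ⟨fun p => v0Q Q (p : ℝ × ℝ).1 (p : ℝ × ℝ).2
      + VQ Q (extend T hT0 u) (p : ℝ × ℝ).1 (p : ℝ × ℝ).2,
    (((v0Q_cont hQi).add (VQ_cont hQm hQi (extend_cont hT0 u)
      (fun a b => extend_bd hT0 u a b) (norm_nonneg u))).comp continuous_subtype_val)⟩

lemma AOp_iterate_bound (hQm : StronglyMeasurable Q)
    (hQi : Integrable Q (volume : Measure ℝ)) (hT0 : 0 ≤ T)
    (u u' : C(↥(tri T), MatC n)) :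
    ∀ (k : ℕ) (p : ↥(tri T)),
      ‖(AOp Q hQm hQi hT0)^[k] u p - (AOp Q hQm hQi hT0)^[k] u' p‖
        ≤ (1/2:ℝ)^k * (dist u u' * Real.exp ((IQ Q + 1) * (p : ℝ × ℝ).1)) := by
  intro k
  induction k with
  | zero =>
    intro p
    have h1 : ‖u p - u' p‖ ≤ dist u u' := by
      rw [← dist_eq_norm]; exact ContinuousMap.dist_apply_le_dist p
    have h2 : (1:ℝ) ≤ Real.exp ((IQ Q + 1) * (p : ℝ × ℝ).1) := by
      refine Real.one_le_exp (mul_nonneg ?_ p.2.1)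
      have := IQ_nonneg Q; linarith
    simp only [Function.iterate_zero, id_eq, pow_zero, one_mul]
    nlinarith [dist_nonneg (x := u) (y := u'), h1, h2]
  | succ k ih =>
    intro p
    rw [Function.iterate_succ_apply', Function.iterate_succ_apply']
    set x := (AOp Q hQm hQi hT0)^[k] u with hx
    set x' := (AOp Q hQm hQi hT0)^[k] u' with hx'
    have hdiff : (AOp Q hQm hQi hT0) x p - (AOp Q hQm hQi hT0) x' p
        = VQ Q (fun a b => extend T hT0 x a b - extend T hT0 x' a b)
            (p : ℝ × ℝ).1 (p : ℝ × ℝ).2 := by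
      show (v0Q Q _ _ + VQ Q (extend T hT0 x) _ _)
          - (v0Q Q _ _ + VQ Q (extend T hT0 x') _ _) = _
      rw [add_sub_add_left_eq_sub]
      exact VQ_sub hQm hQi (extend_cont hT0 x) (fun a b => extend_bd hT0 x a b)
        (norm_nonneg x) (extend_cont hT0 x') (fun a b => extend_bd hT0 x' a b)
        (norm_nonneg x') _ _
    rw [hdiff]
    have hreg : ∀ a b : ℝ, 0 ≤ a → a ≤ b → b ≤ T →
        ‖extend T hT0 x a b - extend T hT0 x' a b‖
          ≤ ((1/2:ℝ)^k * dist u u') * Real.exp ((IQ Q + 1) * a) := by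
      intro a b ha hab hbT
      have hmem : (a, b) ∈ tri T := ⟨ha, hab, hbT⟩
      rw [extend_eq hT0 x hmem, extend_eq hT0 x' hmem]
      have hih := ih ⟨(a, b), hmem⟩
      refine le_trans hih (le_of_eq ?_)
      show (1/2:ℝ)^k * (dist u u' * Real.exp ((IQ Q + 1) * a)) = _
      ring
    have hwd : Continuous
        (uncurry fun a b => extend T hT0 x a b - extend T hT0 x' a b) :=
      (extend_cont hT0 x).sub (extend_cont hT0 x')
    have hbound := VQ_norm_bound (T := T) hQm hQi hwd
      (fun a b => (norm_sub_le _ _).trans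
        (add_le_add (extend_bd hT0 x a b) (extend_bd hT0 x' a b)))
      (lt_add_one _) (mul_nonneg (by positivity) dist_nonneg)
      hreg p.2.1 p.2.2.1 p.2.2.2
    refine le_trans hbound (le_of_eq ?_)
    ring

end Fixed

end Stmt6Aux

/-- The Goursat integral equation `v = v₀ + Vv` has a unique continuous
solution on the triangle `{(ξ,η) : 0 ≤ ξ ≤ η ≤ T}` for every `T > 0`. -/
theorem stmt6 (n : ℕ) (q : ℝ → MatC n)
    (hq : LocallyIntegrableOn q (Ici (0 : ℝ))) (T : ℝ) (hT : 0 < T) :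
    ∃ v : ℝ → ℝ → MatC n,
      (ContinuousOn (fun p : ℝ × ℝ => v p.1 p.2)
          {p : ℝ × ℝ | 0 ≤ p.1 ∧ p.1 ≤ p.2 ∧ p.2 ≤ T}) ∧
      (∀ ξ η : ℝ, 0 ≤ ξ → ξ ≤ η → η ≤ T →
          v ξ η = v0fun n q ξ η + Vop n q v ξ η) ∧
      (∀ v' : ℝ → ℝ → MatC n,
        ContinuousOn (fun p : ℝ × ℝ => v' p.1 p.2)
            {p : ℝ × ℝ | 0 ≤ p.1 ∧ p.1 ≤ p.2 ∧ p.2 ≤ T} →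
        (∀ ξ η : ℝ, 0 ≤ ξ → ξ ≤ η → η ≤ T →
            v' ξ η = v0fun n q ξ η + Vop n q v' ξ η) →
        ∀ ξ η : ℝ, 0 ≤ ξ → ξ ≤ η → η ≤ T → v' ξ η = v ξ η) := by
  classical
  have hT0 : (0:ℝ) ≤ T := hT.le
  have hqInt : IntegrableOn q (Icc (0:ℝ) T) :=
    hq.integrableOn_compact_subset (fun x hx => hx.1) isCompact_Icc
  have hAE : AEStronglyMeasurable q (volume.restrict (Icc (0:ℝ) T)) :=
    hqInt.aestronglyMeasurable
  set Q0 : ℝ → MatC n := hAE.mk q with hQ0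
  have hQ0m : StronglyMeasurable Q0 := hAE.stronglyMeasurable_mk
  have heq : q =ᵐ[volume.restrict (Icc (0:ℝ) T)] Q0 := hAE.ae_eq_mk
  set Q : ℝ → MatC n := (Icc (0:ℝ) T).indicator Q0 with hQdef
  have hQm : StronglyMeasurable Q := hQ0m.indicator measurableSet_Icc
  have hQi : Integrable Q volume := by
    rw [hQdef]
    refine (integrable_indicator_iff (f := Q0) (measurableSet_Icc (a := (0:ℝ)) (b := T))).2 ?_
    exact hqInt.congr_fun_ae heq
  have hqQ : ∀ᵐ x : ℝ, x ∈ Icc (0:ℝ) T → q x = Q x := by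
    refine (ae_restrict_iff' measurableSet_Icc).1 ?_
    filter_upwards [heq, ae_restrict_mem measurableSet_Icc] with x hx hmem
    rw [hx, hQdef, indicator_of_mem hmem]
  set A := Stmt6Aux.AOp (T := T) Q hQm hQi hT0 with hA
  obtain ⟨N, hN⟩ : ∃ N : ℕ, (1/2:ℝ)^N * Real.exp ((Stmt6Aux.IQ Q + 1) * T) ≤ 1/2 := by
    obtain ⟨N, hN⟩ := exists_pow_lt_of_lt_one
      (div_pos one_half_pos (Real.exp_pos ((Stmt6Aux.IQ Q + 1) * T)))
      (by norm_num : (1/2:ℝ) < 1)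
    refine ⟨N, ?_⟩
    have hE := Real.exp_pos ((Stmt6Aux.IQ Q + 1) * T)
    rw [lt_div_iff₀ hE] at hN
    linarith
  have hcontr : ContractingWith (1/2 : ℝ≥0) (A^[N]) := by
    refine ⟨by rw [← NNReal.coe_lt_coe]; norm_num,
      LipschitzWith.of_dist_le_mul fun u u' => ?_⟩
    have hcoe : ((1/2 : ℝ≥0) : ℝ) = 1/2 := by norm_num
    rw [hcoe]
    have h0 : (0:ℝ) ≤ 1/2 * dist u u' := mul_nonneg (by norm_num) dist_nonneg
    rw [ContinuousMap.dist_le h0]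
    intro p
    rw [dist_eq_norm]
    refine le_trans (Stmt6Aux.AOp_iterate_bound hQm hQi hT0 u u' N p) ?_
    have hexp : Real.exp ((Stmt6Aux.IQ Q + 1) * (p : ℝ × ℝ).1)
        ≤ Real.exp ((Stmt6Aux.IQ Q + 1) * T) := by
      refine Real.exp_le_exp.2 (mul_le_mul_of_nonneg_left ?_ ?_)
      · exact le_trans p.2.2.1 p.2.2.2
      · have := Stmt6Aux.IQ_nonneg Q; linarith
    have hp2 : (0:ℝ) ≤ (1/2:ℝ)^N := by positivity
    have hd : (0:ℝ) ≤ dist u u' := dist_nonneg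
    nlinarith [mul_le_mul_of_nonneg_left hexp (mul_nonneg hp2 hd),
      mul_le_mul_of_nonneg_right hN hd]
  set ustar := hcontr.fixedPoint (A^[N]) with hustar
  have hfixA : Function.IsFixedPt A ustar := hcontr.isFixedPt_fixedPoint_iterate
  refine ⟨Stmt6Aux.extend T hT0 ustar, ?_, ?_, ?_⟩
  · exact (Stmt6Aux.extend_cont hT0 ustar).continuousOn
  · intro ξ η hξ hξη hη
    have hmem : (ξ, η) ∈ Stmt6Aux.tri T := ⟨hξ, hξη, hη⟩
    rw [Stmt6Aux.extend_eq hT0 ustar hmem]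
    conv_lhs => rw [← hfixA]
    show Stmt6Aux.v0Q Q ξ η
        + Stmt6Aux.VQ Q (Stmt6Aux.extend T hT0 ustar) ξ η = _
    rw [Stmt6Aux.v0_congr hT0 hqQ hξ hξη hη,
      Stmt6Aux.vop_congr hqQ (Stmt6Aux.extend T hT0 ustar) hξ hξη hη]
  · intro v' hv'cont hv'eq ξ η hξ hξη hη
    set u' : C(↥(Stmt6Aux.tri T), MatC n) :=
      ⟨fun p => v' (p : ℝ × ℝ).1 (p : ℝ × ℝ).2, by
        exact hv'cont.restrict⟩ with hu'
    have hfix' : Function.IsFixedPt A u' := by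
      refine ContinuousMap.ext fun p => ?_
      obtain ⟨pm1, pm2, pm3⟩ := p.2
      show Stmt6Aux.v0Q Q (p : ℝ × ℝ).1 (p : ℝ × ℝ).2
          + Stmt6Aux.VQ Q (Stmt6Aux.extend T hT0 u') (p : ℝ × ℝ).1 (p : ℝ × ℝ).2
          = v' (p : ℝ × ℝ).1 (p : ℝ × ℝ).2
      rw [hv'eq (p : ℝ × ℝ).1 (p : ℝ × ℝ).2 pm1 pm2 pm3,
        Stmt6Aux.v0_congr hT0 hqQ pm1 pm2 pm3,
        Stmt6Aux.vop_congr hqQ v' pm1 pm2 pm3]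
      congr 1
      refine Stmt6Aux.VQ_congr_region pm1 pm2 pm3 fun a b ha hab hbT => ?_
      rw [Stmt6Aux.extend_eq hT0 u' ⟨ha, hab, hbT⟩]
      rfl
    have huu : u' = ustar := hcontr.fixedPoint_unique (hfix'.iterate N)
    have hmem : (ξ, η) ∈ Stmt6Aux.tri T := ⟨hξ, hξη, hη⟩
    calc v' ξ η = u' ⟨(ξ, η), hmem⟩ := rfl
      _ = ustar ⟨(ξ, η), hmem⟩ := by rw [huu]
      _ = Stmt6Aux.extend T hT0 ustar ξ η :=
        (Stmt6Aux.extend_eq hT0 ustar hmem).symm
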